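/- Let D ≥ 1 be an integer and let θ : ℝ^D → ℝ be a twice continuously differentiable radial function (i.e. θ(x) depends only on the Euclidean norm ‖x‖), and let C ≥ 0 be such that the operator norm of the second Fréchet derivative satisfies ‖d²θ(z)‖ ≤ C for every z ∈ ℝ^D. Then for all x, y ∈ ℝ^D one has |θ(x) − θ(y)| ≤ (C/2)·| ‖x‖² − ‖y‖² |. -/

import Mathlib

set_option maxHeartbeats 1000000 in
/-- **Lemma (radial functions).** If `θ : ℝ^D → ℝ` is `C²` and radial, and the operator norm
of its second Fréchet derivative is bounded by `C` everywhere, then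
`|θ x - θ y| ≤ (C/2) * |‖x‖² - ‖y‖²|` for all `x, y`. -/
theorem radial_function_sq_norm_lipschitz
    (D : ℕ) (hD : 1 ≤ D)
    (θ : EuclideanSpace ℝ (Fin D) → ℝ)
    (hθ : ContDiff ℝ 2 θ)
    (hrad : ∀ x y : EuclideanSpace ℝ (Fin D), ‖x‖ = ‖y‖ → θ x = θ y)
    (C : ℝ) (hC : 0 ≤ C)
    (hC2 : ∀ z : EuclideanSpace ℝ (Fin D), ‖iteratedFDeriv ℝ 2 θ z‖ ≤ C) :
    ∀ x y : EuclideanSpace ℝ (Fin D),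
      |θ x - θ y| ≤ C / 2 * |‖x‖ ^ 2 - ‖y‖ ^ 2| := by
  haveI : NeZero D := ⟨by omega⟩
  set e : EuclideanSpace ℝ (Fin D) := EuclideanSpace.single (0 : Fin D) (1 : ℝ) with he
  have hne : ‖e‖ = 1 := by simp [he]
  set G : ℝ → ℝ := fun t => θ (t • e) with hG
  have hGc : ContDiff ℝ 2 G := hθ.comp (contDiff_id.smul contDiff_const)
  have hGd : Differentiable ℝ G := hGc.differentiable (by norm_num)
  have hθd : Differentiable ℝ θ := hθ.differentiable (by norm_num)
  -- derivative formula
  have hder : ∀ t : ℝ, HasDerivAt G (fderiv ℝ θ (t • e) e) t := by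
    intro t
    have h1 : HasDerivAt (fun t : ℝ => t • e) e t := by
      simpa using (hasDerivAt_id t).smul_const e
    exact (hθd (t • e)).hasFDerivAt.comp_hasDerivAt t h1
  -- fderiv θ is C-Lipschitz
  have hfd : Differentiable ℝ (fderiv ℝ θ) :=
    (hθ.fderiv_right (m := 1) (by norm_num)).differentiable (by norm_num)
  have hlip : LipschitzWith C.toNNReal (fderiv ℝ θ) := by
    apply lipschitzWith_of_nnnorm_fderiv_le hfd
    intro z
    rw [← NNReal.coe_le_coe, coe_nnnorm, Real.coe_toNNReal _ hC]
    have h1 : ‖fderiv ℝ (fderiv ℝ θ) z‖ = ‖iteratedFDeriv ℝ 1 (fderiv ℝ θ) z‖ := by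
      rw [← norm_iteratedFDeriv_fderiv, norm_iteratedFDeriv_zero]
    rw [h1, norm_iteratedFDeriv_fderiv]
    exact hC2 z
  -- deriv G is even-odd: G is even, so deriv G 0 = 0
  have hGeven : ∀ t : ℝ, G (-t) = G t := by
    intro t
    apply hrad
    rw [norm_smul, norm_smul, norm_neg]
  have hG0 : deriv G 0 = 0 := by
    set c : ℝ := fderiv ℝ θ ((0:ℝ) • e) e with hc
    have h0 : HasDerivAt G c (-(0:ℝ)) := by
      rw [neg_zero]; exact hder 0
    have h1 : HasDerivAt (fun t : ℝ => G (-t)) (c * (-1)) 0 :=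
      h0.comp (0:ℝ) (hasDerivAt_neg (0:ℝ))
    have h3 : HasDerivAt G (-c) 0 := by
      apply h1.congr_of_eventuallyEq ?_ |>.congr_deriv (by ring)
      filter_upwards with t using (hGeven t).symm
    have hcc : c = -c := (hder 0).unique h3
    rw [(hder 0).deriv, ← hc]
    linarith
  -- |deriv G t| ≤ C * |t|
  have hderbd : ∀ t : ℝ, |deriv G t| ≤ C * |t| := by
    intro t
    have h1 : deriv G t - deriv G 0 = (fderiv ℝ θ (t • e) - fderiv ℝ θ ((0:ℝ) • e)) e := by
      rw [(hder t).deriv, (hder 0).deriv]; simp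
    have h2 : ‖(fderiv ℝ θ (t • e) - fderiv ℝ θ ((0:ℝ) • e)) e‖
        ≤ ‖fderiv ℝ θ (t • e) - fderiv ℝ θ ((0:ℝ) • e)‖ * ‖e‖ :=
      ContinuousLinearMap.le_opNorm _ _
    have h3 : ‖fderiv ℝ θ (t • e) - fderiv ℝ θ ((0:ℝ) • e)‖ ≤ C * ‖t • e - (0:ℝ) • e‖ := by
      have := hlip.norm_sub_le (t • e) ((0:ℝ) • e)
      rw [Real.coe_toNNReal _ hC] at this
      exact this
    have h4 : ‖t • e - (0:ℝ) • e‖ = |t| := by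
      rw [zero_smul, sub_zero, norm_smul, hne, mul_one]; rfl
    calc |deriv G t| = ‖(fderiv ℝ θ (t • e) - fderiv ℝ θ ((0:ℝ) • e)) e‖ := by
          rw [← h1, hG0, sub_zero]; rfl
      _ ≤ ‖fderiv ℝ θ (t • e) - fderiv ℝ θ ((0:ℝ) • e)‖ * ‖e‖ := h2
      _ ≤ (C * ‖t • e - (0:ℝ) • e‖) * ‖e‖ := by
          exact mul_le_mul_of_nonneg_right h3 (norm_nonneg _)
      _ = C * |t| := by rw [h4, hne, mul_one]
  -- monotone auxiliary functions on [0, ∞)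
  have key : ∀ a b : ℝ, 0 ≤ b → b ≤ a → |G a - G b| ≤ C / 2 * (a ^ 2 - b ^ 2) := by
    intro a b hb hba
    have mono : ∀ (s : ℝ), s = 1 ∨ s = -1 →
        MonotoneOn (fun t => C / 2 * t ^ 2 + s * G t) (Set.Ici (0:ℝ)) := by
      intro s hs
      apply monotoneOn_of_deriv_nonneg (convex_Ici 0)
      · exact (Continuous.continuousOn (by continuity)).add
          (continuous_const.mul hGd.continuous).continuousOn
      · apply DifferentiableOn.add
        · exact (differentiable_const _ |>.mul (differentiable_pow 2)).differentiableOn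
        · exact ((differentiable_const s).mul hGd).differentiableOn
      · intro t ht
        rw [interior_Ici] at ht
        have ht0 : 0 < t := ht
        have hd : deriv (fun t => C / 2 * t ^ 2 + s * G t) t
            = C / 2 * (2 * t) + s * deriv G t := by
          rw [deriv_fun_add, deriv_const_mul, deriv_const_mul]
          · congr 1
            · congr 1
              simp [deriv_pow]
          · exact hGd t
          · exact differentiable_pow 2 |>.differentiableAt
          · exact (differentiable_const _ |>.mul (differentiable_pow 2)).differentiableAt
          · exact ((differentiable_const s).mul hGd).differentiableAt
        rw [hd]
        have := hderbd t
        rw [abs_of_pos ht0] at this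
        have habs := abs_le.mp this
        rcases hs with rfl | rfl <;> nlinarith
    have h1 := mono 1 (Or.inl rfl) (Set.mem_Ici.mpr hb) (Set.mem_Ici.mpr (hb.trans hba)) hba
    have h2 := mono (-1) (Or.inr rfl) (Set.mem_Ici.mpr hb) (Set.mem_Ici.mpr (hb.trans hba)) hba
    simp only [one_mul, neg_one_mul] at h1 h2
    rw [abs_le]
    constructor <;> nlinarith
  -- conclude
  have hGrep : ∀ x : EuclideanSpace ℝ (Fin D), θ x = G ‖x‖ := by
    intro x
    apply hrad
    rw [norm_smul, hne, mul_one, Real.norm_eq_abs, abs_of_nonneg (norm_nonneg x)]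
  have main : ∀ a b : ℝ, 0 ≤ a → 0 ≤ b → |G a - G b| ≤ C / 2 * |a ^ 2 - b ^ 2| := by
    intro a b ha hb
    rcases le_total b a with h | h
    · have := key a b hb h
      rwa [abs_of_nonneg (by nlinarith : (0:ℝ) ≤ a ^ 2 - b ^ 2)]
    · have := key b a ha h
      rw [abs_sub_comm] at this
      have h2 : |a ^ 2 - b ^ 2| = b ^ 2 - a ^ 2 := by
        rw [abs_sub_comm]
        exact abs_of_nonneg (by nlinarith)
      rwa [h2]
  intro x y
  rw [hGrep x, hGrep y]
  exact main ‖x‖ ‖y‖ (norm_nonneg x) (norm_nonneg y)
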